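/- Let x, x_i, x_j, x_k, x_{ij}, x_{jk}, x_{ki} be real numbers and α_i, α_j, α_k nonzero real parameters. Suppose the three cross-ratio (Q1_{δ=0}) quad-equations adjacent to x hold: (x−x_i)(x_{ij}−x_j)/((x_i−x_{ij})(x_j−x)) = α_i/α_j, (x−x_j)(x_{jk}−x_k)/((x_j−x_{jk})(x_k−x)) = α_j/α_k, and (x−x_k)(x_{ki}−x_i)/((x_k−x_{ki})(x_i−x)) = α_k/α_i, where all appearing denominators are nonzero. Then the octahedron relation (x_{ij}−x_i)(x_{jk}−x_j)(x_{ki}−x_k) = (x_{ij}−x_j)(x_{jk}−x_k)(x_{ki}−x_i) holds. -/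

import Mathlib

theorem stmt0 (x xi xj xk xij xjk xki ai aj ak : ℝ)
    (hai : ai ≠ 0) (haj : aj ≠ 0) (hak : ak ≠ 0)
    (h1d : (xi - xij) * (xj - x) ≠ 0)
    (h2d : (xj - xjk) * (xk - x) ≠ 0)
    (h3d : (xk - xki) * (xi - x) ≠ 0)
    (h1 : (x - xi) * (xij - xj) / ((xi - xij) * (xj - x)) = ai / aj)
    (h2 : (x - xj) * (xjk - xk) / ((xj - xjk) * (xk - x)) = aj / ak)
    (h3 : (x - xk) * (xki - xi) / ((xk - xki) * (xi - x)) = ak / ai) :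
    (xij - xi) * (xjk - xj) * (xki - xk) = (xij - xj) * (xjk - xk) * (xki - xi) := by
  have d2 : xj - x ≠ 0 := right_ne_zero_of_mul h1d
  have d4 : xk - x ≠ 0 := right_ne_zero_of_mul h2d
  have d6 : xi - x ≠ 0 := right_ne_zero_of_mul h3d
  have H : ((x - xi) * (xij - xj) / ((xi - xij) * (xj - x))) *
      ((x - xj) * (xjk - xk) / ((xj - xjk) * (xk - x))) *
      ((x - xk) * (xki - xi) / ((xk - xki) * (xi - x))) = 1 := by
    rw [h1, h2, h3]; field_simp
  have d1 : xi - xij ≠ 0 := left_ne_zero_of_mul h1d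
  have d3 : xj - xjk ≠ 0 := left_ne_zero_of_mul h2d
  have d5 : xk - xki ≠ 0 := left_ne_zero_of_mul h3d
  field_simp at H
  have hc : (xi - x) * (xj - x) * (xk - x) ≠ 0 :=
    mul_ne_zero (mul_ne_zero d6 d2) d4
  apply mul_left_cancel₀ hc
  linear_combination H
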